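/- arXiv:2203.04655 — 4 statements merged into one kernel-verified Lean document; each statement's English description precedes it below -/
import Mathlib

section
/- For every η in [-1/2,1/2]² \ {0}, the limit as N→∞ of the symmetric partial sums over lattice points l ∈ ℤ² with |l|_∞ ≤ N of (η+l)^⊥/|η+l|^{3-ε} exists, where 0 < ε < 1 and x^⊥ = (-x₂, x₁). -/
open Filter


/-- MVT bound for `t ↦ t ^ (-p)` on `[m, ∞)`. -/
lemma stmt0_aux_mvt {p m a b : ℝ} (hp : 0 ≤ p) (hm : 0 < m) (ha : m ≤ a) (hb : m ≤ b) :
    |a ^ (-p) - b ^ (-p)| ≤ p * m ^ (-p - 1) * |a - b| := by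
  have key : ∀ x y : ℝ, m ≤ x → m ≤ y → x ≤ y →
      x ^ (-p) - y ^ (-p) ≤ p * m ^ (-p - 1) * (y - x) := by
    intro x y hx hy hxy
    rcases eq_or_lt_of_le hxy with rfl | hlt
    · simp
    · have hx0 : 0 < x := lt_of_lt_of_le hm hx
      have hcont : ContinuousOn (fun t : ℝ => t ^ (-p)) (Set.Icc x y) := by
        intro z hz
        have hz0 : z ≠ 0 := ne_of_gt (lt_of_lt_of_le hm (le_trans hx hz.1))
        exact (Real.continuousAt_rpow_const z (-p) (Or.inl hz0)).continuousWithinAt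
      have hderiv : ∀ z ∈ Set.Ioo x y, HasDerivAt (fun t : ℝ => t ^ (-p)) (-p * z ^ (-p - 1)) z := by
        intro z hz
        have hz0 : z ≠ 0 := ne_of_gt (lt_of_lt_of_le hx0 hz.1.le)
        simpa using Real.hasDerivAt_rpow_const (p := -p) (Or.inl hz0)
      obtain ⟨c, hc, hceq⟩ := exists_hasDerivAt_eq_slope (fun t : ℝ => t ^ (-p))
        (fun z => -p * z ^ (-p - 1)) hlt hcont hderiv
      have hyx : (0:ℝ) < y - x := by linarith
      have h1 : x ^ (-p) - y ^ (-p) = p * c ^ (-p - 1) * (y - x) := by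
        have h2 : y ^ (-p) - x ^ (-p) = -p * c ^ (-p - 1) * (y - x) := by
          field_simp at hceq
          linarith [hceq]
        linarith
      rw [h1]
      have hcge : m ≤ c := le_trans hx hc.1.le
      have hle : c ^ (-p - 1) ≤ m ^ (-p - 1) :=
        Real.rpow_le_rpow_of_nonpos hm hcge (by linarith)
      have := mul_le_mul_of_nonneg_right (mul_le_mul_of_nonneg_left hle hp) hyx.le
      linarith
  rcases le_total a b with h | h
  · have h1 := key a b ha hb h
    have h2 : b ^ (-p) ≤ a ^ (-p) :=
      Real.rpow_le_rpow_of_nonpos (lt_of_lt_of_le hm ha) h (by linarith)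
    rw [abs_of_nonneg (by linarith), abs_of_nonpos (by linarith)]
    linarith
  · have h1 := key b a hb ha h
    have h2 : a ^ (-p) ≤ b ^ (-p) :=
      Real.rpow_le_rpow_of_nonpos (lt_of_lt_of_le hm hb) h (by linarith)
    rw [abs_of_nonpos (by linarith), abs_of_nonneg (by linarith)]
    linarith

noncomputable def stmt0R (η : ℝ × ℝ) (l : ℤ × ℤ) : ℝ :=
  Real.sqrt ((η.1 + (l.1 : ℝ))^2 + (η.2 + (l.2 : ℝ))^2)

noncomputable def stmt0T (p : ℝ) (η : ℝ × ℝ) (l : ℤ × ℤ) : ℝ × ℝ :=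
  (stmt0R η l) ^ (-p) • ((-(η.2 + (l.2 : ℝ)), η.1 + (l.1 : ℝ)) : ℝ × ℝ)

noncomputable def stmt0F (p : ℝ) (η : ℝ × ℝ) (l : ℤ × ℤ) : ℝ × ℝ :=
  (2:ℝ)⁻¹ • (stmt0T p η l + stmt0T p η (-l))

lemma stmt0R_eq_abs (η : ℝ × ℝ) (l : ℤ × ℤ) :
    stmt0R η l = ‖(⟨η.1 + (l.1 : ℝ), η.2 + (l.2 : ℝ)⟩ : ℂ)‖ := by
  rw [Complex.norm_def, Complex.normSq_mk, stmt0R]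
  ring_nf

lemma stmt0R_ge (η : ℝ × ℝ) (hη1 : |η.1| ≤ 1/2) (hη2 : |η.2| ≤ 1/2) (l : ℤ × ℤ) :
    ((max l.1.natAbs l.2.natAbs : ℕ) : ℝ) - 1/2 ≤ stmt0R η l := by
  have key : ∀ x y : ℝ, |x| ≤ Real.sqrt (x^2 + y^2) := by
    intro x y
    rw [← Real.sqrt_sq_eq_abs]
    exact Real.sqrt_le_sqrt (by nlinarith [sq_nonneg y])
  have h1 : |(l.1 : ℝ)| - 1/2 ≤ stmt0R η l := by
    have ha : |(l.1:ℝ)| ≤ |η.1 + (l.1:ℝ)| + |η.1| := by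
      calc |(l.1:ℝ)| = |(η.1 + (l.1:ℝ)) + (-η.1)| := by ring_nf
        _ ≤ |η.1 + (l.1:ℝ)| + |(-η.1)| := abs_add_le _ _
        _ = |η.1 + (l.1:ℝ)| + |η.1| := by rw [abs_neg]
    have := key (η.1 + (l.1:ℝ)) (η.2 + (l.2:ℝ))
    rw [stmt0R]; linarith
  have h2 : |(l.2 : ℝ)| - 1/2 ≤ stmt0R η l := by
    have ha : |(l.2:ℝ)| ≤ |η.2 + (l.2:ℝ)| + |η.2| := by
      calc |(l.2:ℝ)| = |(η.2 + (l.2:ℝ)) + (-η.2)| := by ring_nf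
        _ ≤ |η.2 + (l.2:ℝ)| + |(-η.2)| := abs_add_le _ _
        _ = |η.2 + (l.2:ℝ)| + |η.2| := by rw [abs_neg]
    have hk : |η.2 + (l.2:ℝ)| ≤ Real.sqrt ((η.1 + (l.1:ℝ))^2 + (η.2 + (l.2:ℝ))^2) := by
      rw [← Real.sqrt_sq_eq_abs]
      exact Real.sqrt_le_sqrt (by nlinarith [sq_nonneg (η.1 + (l.1:ℝ))])
    rw [stmt0R]; linarith
  have hcast : ((max l.1.natAbs l.2.natAbs : ℕ) : ℝ) = max |(l.1:ℝ)| |(l.2:ℝ)| := by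
    push_cast [Nat.cast_natAbs, Int.cast_abs]
    norm_num
  rw [hcast, sub_le_iff_le_add]
  exact max_le (by linarith) (by linarith)

lemma stmt0R_diff (η : ℝ × ℝ) (hη1 : |η.1| ≤ 1/2) (hη2 : |η.2| ≤ 1/2) (l : ℤ × ℤ) :
    |stmt0R η l - stmt0R η (-l)| ≤ 2 := by
  rw [stmt0R_eq_abs, stmt0R_eq_abs]
  have hneg : ‖(⟨η.1 + ((-l).1 : ℝ), η.2 + ((-l).2 : ℝ)⟩ : ℂ)‖
      = ‖(⟨(l.1:ℝ) - η.1, (l.2:ℝ) - η.2⟩ : ℂ)‖ := by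
    rw [← norm_neg (⟨(l.1:ℝ) - η.1, (l.2:ℝ) - η.2⟩ : ℂ)]
    congr 1
    rw [Complex.ext_iff]
    constructor <;> simp <;> push_cast <;> ring
  rw [hneg]
  have key := abs_norm_sub_norm_le
    (⟨η.1 + (l.1 : ℝ), η.2 + (l.2 : ℝ)⟩ : ℂ) (⟨(l.1:ℝ) - η.1, (l.2:ℝ) - η.2⟩ : ℂ)
  have hsub : (⟨η.1 + (l.1 : ℝ), η.2 + (l.2 : ℝ)⟩ : ℂ) - ⟨(l.1:ℝ) - η.1, (l.2:ℝ) - η.2⟩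
      = ⟨2 * η.1, 2 * η.2⟩ := by
    rw [Complex.ext_iff]
    constructor <;> simp <;> ring
  rw [hsub] at key
  have hbd := Complex.norm_le_abs_re_add_abs_im (⟨2 * η.1, 2 * η.2⟩ : ℂ)
  simp only [Complex.ofReal_mul] at hbd
  have h1 : |2 * η.1| ≤ 1 := by rw [abs_mul]; rw [abs_two]; linarith
  have h2 : |2 * η.2| ≤ 1 := by rw [abs_mul]; rw [abs_two]; linarith
  linarith
-- appended to t2
set_option maxHeartbeats 1000000 in
lemma stmt0F_bound (p : ℝ) (hp2 : 2 < p) (hp3 : p ≤ 3) (η : ℝ × ℝ)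
    (hη1 : |η.1| ≤ 1/2) (hη2 : |η.2| ≤ 1/2) (l : ℤ × ℤ) (hl : l ≠ 0) :
    ‖stmt0F p η l‖ ≤ 104 * ((max l.1.natAbs l.2.natAbs : ℕ) : ℝ) ^ (-p) := by
  set n : ℝ := ((max l.1.natAbs l.2.natAbs : ℕ) : ℝ) with hn_def
  have hn : 1 ≤ n := by
    rw [hn_def]
    have : 1 ≤ max l.1.natAbs l.2.natAbs := by
      have : l.1 ≠ 0 ∨ l.2 ≠ 0 := by
        by_contra hc
        push_neg at hc
        exact hl (Prod.ext hc.1 hc.2)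
      rcases this with h | h
      · exact le_max_of_le_left (by omega)
      · exact le_max_of_le_right (by omega)
    exact_mod_cast this
  have hn0 : (0:ℝ) < n := by linarith
  have hm : (0:ℝ) < n / 2 := by linarith
  -- the max-norm of -l equals that of l
  have hmaxneg : ((max (-l).1.natAbs (-l).2.natAbs : ℕ) : ℝ) = n := by
    rw [hn_def]
    norm_num
  -- lower bounds for the radii
  have hR1 : n / 2 ≤ stmt0R η l := by
    have := stmt0R_ge η hη1 hη2 l
    rw [← hn_def] at this
    linarith
  have hR2 : n / 2 ≤ stmt0R η (-l) := by
    have := stmt0R_ge η hη1 hη2 (-l)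
    rw [hmaxneg] at this
    linarith
  set A : ℝ := stmt0R η l ^ (-p) with hA_def
  set B : ℝ := stmt0R η (-l) ^ (-p) with hB_def
  have hA0 : 0 ≤ A := Real.rpow_nonneg (Real.sqrt_nonneg _) _
  have hB0 : 0 ≤ B := Real.rpow_nonneg (Real.sqrt_nonneg _) _
  -- rpow algebra
  have h2p : (2:ℝ) ^ p ≤ 8 := by
    calc (2:ℝ) ^ p ≤ (2:ℝ) ^ (3:ℝ) := Real.rpow_le_rpow_of_exponent_le one_le_two hp3
      _ = 8 := by
        rw [show (3:ℝ) = ((3:ℕ):ℝ) by norm_num, Real.rpow_natCast]; norm_num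
  have h2p1 : (2:ℝ) ^ (p+1) ≤ 16 := by
    calc (2:ℝ) ^ (p+1) ≤ (2:ℝ) ^ (4:ℝ) := Real.rpow_le_rpow_of_exponent_le one_le_two (by linarith)
      _ = 16 := by
        rw [show (4:ℝ) = ((4:ℕ):ℝ) by norm_num, Real.rpow_natCast]; norm_num
  have hnp0 : (0:ℝ) ≤ n ^ (-p) := Real.rpow_nonneg hn0.le _
  have halg1 : (n/2) ^ (-p) ≤ 8 * n ^ (-p) := by
    have : (n/2) ^ (-p) = n ^ (-p) * (2:ℝ) ^ p := by
      rw [Real.div_rpow hn0.le (by norm_num), Real.rpow_neg (by norm_num : (0:ℝ) ≤ 2),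
        div_eq_mul_inv, inv_inv]
    rw [this]
    nlinarith
  have halg2 : n * (n/2) ^ (-p-1) ≤ 16 * n ^ (-p) := by
    have h1 : (n/2) ^ (-p-1) = n ^ (-p-1) * (2:ℝ) ^ (p+1) := by
      rw [show (-p-1 : ℝ) = -(p+1) by ring, Real.div_rpow hn0.le (by norm_num),
        Real.rpow_neg (by norm_num : (0:ℝ) ≤ 2), div_eq_mul_inv, inv_inv]
    have h2 : n * n ^ (-p-1) = n ^ (-p) := by
      conv_rhs => rw [show (-p : ℝ) = 1 + (-p-1) by ring, Real.rpow_add hn0, Real.rpow_one]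
    have h3 : (0:ℝ) ≤ n ^ (-p-1) := Real.rpow_nonneg hn0.le _
    calc n * (n/2) ^ (-p-1) = n * n ^ (-p-1) * (2:ℝ) ^ (p+1) := by rw [h1]; ring
      _ = n ^ (-p) * (2:ℝ) ^ (p+1) := by rw [h2]
      _ ≤ 16 * n ^ (-p) := by nlinarith
  -- bounds on A, B
  have hA : A ≤ 8 * n ^ (-p) := by
    calc A ≤ (n/2) ^ (-p) :=
          Real.rpow_le_rpow_of_nonpos hm hR1 (by linarith)
      _ ≤ 8 * n ^ (-p) := halg1
  have hB : B ≤ 8 * n ^ (-p) := by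
    calc B ≤ (n/2) ^ (-p) :=
          Real.rpow_le_rpow_of_nonpos hm hR2 (by linarith)
      _ ≤ 8 * n ^ (-p) := halg1
  -- bound on n * |A - B|
  have hAB : n * |A - B| ≤ 96 * n ^ (-p) := by
    have hmvt := stmt0_aux_mvt (by linarith : (0:ℝ) ≤ p) hm hR1 hR2
    have hdiff := stmt0R_diff η hη1 hη2 l
    have h1 : |A - B| ≤ p * (n/2) ^ (-p-1) * 2 := by
      calc |A - B| ≤ p * (n/2) ^ (-p-1) * |stmt0R η l - stmt0R η (-l)| := hmvt
        _ ≤ p * (n/2) ^ (-p-1) * 2 :=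
            mul_le_mul_of_nonneg_left hdiff (by positivity)
    calc n * |A - B| ≤ n * (p * (n/2) ^ (-p-1) * 2) :=
          mul_le_mul_of_nonneg_left h1 hn0.le
      _ = 2 * p * (n * (n/2) ^ (-p-1)) := by ring
      _ ≤ 6 * (16 * n ^ (-p)) :=
          mul_le_mul (by linarith) halg2 (by positivity) (by norm_num)
      _ = 96 * n ^ (-p) := by ring
  -- components
  have hl1 : |(l.1:ℝ)| ≤ n := by
    rw [hn_def]
    push_cast [Nat.cast_natAbs, Int.cast_abs]
    exact le_max_left _ _
  have hl2 : |(l.2:ℝ)| ≤ n := by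
    rw [hn_def]
    push_cast [Nat.cast_natAbs, Int.cast_abs]
    exact le_max_right _ _
  have hcomp : ∀ u v : ℝ, |u| ≤ 1/2 → |(v:ℝ)| ≤ n →
      |2⁻¹ * (u * (A + B) + v * (A - B))| ≤ 104 * n ^ (-p) := by
    intro u v hu hv
    have h1 : |u * (A + B) + v * (A - B)| ≤ |u| * |A + B| + |v| * |A - B| := by
      calc |u * (A + B) + v * (A - B)| ≤ |u * (A + B)| + |v * (A - B)| := abs_add_le _ _
        _ = |u| * |A + B| + |v| * |A - B| := by rw [abs_mul, abs_mul]
    have h2 : |A + B| = A + B := abs_of_nonneg (by linarith)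
    have h3 : |u| * |A + B| ≤ (1/2) * (A + B) := by
      rw [h2]
      have := abs_nonneg u
      nlinarith
    have h4 : |v| * |A - B| ≤ n * |A - B| := by
      have := abs_nonneg (A - B)
      nlinarith
    have h5 : |u * (A + B) + v * (A - B)| ≤ (1/2) * (16 * n ^ (-p)) + 96 * n ^ (-p) := by
      have := abs_nonneg (A-B)
      nlinarith
    rw [abs_mul]
    have : |(2:ℝ)⁻¹| = 2⁻¹ := by norm_num
    rw [this]
    nlinarith [abs_nonneg (u * (A + B) + v * (A - B))]
  -- compute the two components of stmt0F
  have hF : stmt0F p η l =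
      (2⁻¹ * (-(η.2) * (A + B) + -(l.2:ℝ) * (A - B)), 2⁻¹ * (η.1 * (A + B) + (l.1:ℝ) * (A - B))) := by
    have e1 : ((-l).1 : ℝ) = -(l.1:ℝ) := by rw [Prod.fst_neg, Int.cast_neg]
    have e2 : ((-l).2 : ℝ) = -(l.2:ℝ) := by rw [Prod.snd_neg, Int.cast_neg]
    simp only [stmt0F, stmt0T, ← hA_def, ← hB_def, e1, e2, Prod.smul_mk, Prod.mk_add_mk,
      smul_eq_mul, Prod.mk.injEq]
    constructor <;> ring
  rw [hF]
  rw [Prod.norm_def]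
  simp only [Real.norm_eq_abs]
  apply max_le
  · have := hcomp (-(η.2)) (-(l.2:ℝ)) (by rw [abs_neg]; exact hη2) (by rw [abs_neg]; exact hl2)
    exact this
  · exact hcomp η.1 (l.1:ℝ) hη1 hl1

/-- For every `η ∈ [-1/2,1/2]² \ {0}`, the limit as `N → ∞` of the symmetric
partial sums `∑_{|l|_∞ ≤ N} (η+l)^⊥ / |η+l|^{3-ε}` exists, where `0 < ε < 1` and
`x^⊥ = (-x₂, x₁)`. -/
theorem stmt0 (ε : ℝ) (hε : 0 < ε) (hε1 : ε < 1)
    (η : ℝ × ℝ) (hη : η ∈ Set.Icc ((-(1:ℝ)/2, -(1:ℝ)/2)) ((1/2 : ℝ), (1/2 : ℝ)))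
    (hη0 : η ≠ 0) :
    ∃ L : ℝ × ℝ, Tendsto (fun N : ℕ =>
        ∑ l ∈ Finset.Icc (-(N:ℤ)) (N:ℤ) ×ˢ Finset.Icc (-(N:ℤ)) (N:ℤ),
          (Real.sqrt ((η.1 + (l.1 : ℝ))^2 + (η.2 + (l.2 : ℝ))^2)) ^ (-(3 - ε)) •
            ((-(η.2 + (l.2 : ℝ)), η.1 + (l.1 : ℝ)) : ℝ × ℝ))
      atTop (nhds L) := by
  simp only [Set.mem_Icc, Prod.le_def] at hη
  obtain ⟨⟨ha1, ha2⟩, hb1, hb2⟩ := hη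
  have hη1 : |η.1| ≤ 1/2 := abs_le.mpr ⟨by linarith, hb1⟩
  have hη2 : |η.2| ≤ 1/2 := abs_le.mpr ⟨by linarith, hb2⟩
  set p : ℝ := 3 - ε with hp_def
  have hp2 : (2:ℝ) < p := by rw [hp_def]; linarith
  have hp3 : p ≤ 3 := by rw [hp_def]; linarith
  -- summability of the symmetrized terms
  have hsum : Summable (stmt0F p η) := by
    have hsg : Summable (fun x : Fin 2 → ℤ => 104 * (‖x‖ ^ (-p))) :=
      (EisensteinSeries.summable_one_div_norm_rpow hp2).mul_left 104
    have hsg2 : Summable (fun l : ℤ × ℤ =>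
        104 * (‖(finTwoArrowEquiv ℤ).symm l‖ ^ (-p))) :=
      hsg.comp_injective (finTwoArrowEquiv ℤ).symm.injective
    apply Summable.of_norm_bounded_eventually hsg2
    rw [Filter.eventually_cofinite]
    apply Set.Finite.subset (Set.finite_singleton (0 : ℤ × ℤ))
    intro l hl
    simp only [Set.mem_setOf_eq] at hl
    simp only [Set.mem_singleton_iff]
    by_contra h0
    apply hl
    have hnorm : ‖(finTwoArrowEquiv ℤ).symm l‖ = ((max l.1.natAbs l.2.natAbs : ℕ) : ℝ) := by
      rw [EisensteinSeries.norm_eq_max_natAbs]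
      simp [finTwoArrowEquiv]
    rw [hnorm]
    exact stmt0F_bound p hp2 hp3 η hη1 hη2 l h0
  obtain ⟨L, hL⟩ := hsum
  refine ⟨L, ?_⟩
  -- the boxes
  set Bx : ℕ → Finset (ℤ × ℤ) :=
    fun N => Finset.Icc (-(N:ℤ)) (N:ℤ) ×ˢ Finset.Icc (-(N:ℤ)) (N:ℤ) with hBx_def
  have htb : Tendsto Bx atTop atTop := by
    apply tendsto_atTop_finset_of_monotone
    · intro a b hab
      have h1 : (a:ℤ) ≤ (b:ℤ) := by exact_mod_cast hab
      exact Finset.product_subset_product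
        (Finset.Icc_subset_Icc (by omega) h1) (Finset.Icc_subset_Icc (by omega) h1)
    · intro x
      refine ⟨max x.1.natAbs x.2.natAbs, ?_⟩
      simp only [hBx_def, Finset.mem_product, Finset.mem_Icc]
      constructor <;> constructor <;>
        simp only [Nat.cast_max] <;> omega
  have hL' : Tendsto (fun N : ℕ => ∑ l ∈ Bx N, stmt0F p η l) atTop (nhds L) := by
    have := hL.comp htb
    exact this
  -- symmetrization identity on each box
  have hsymm : ∀ N : ℕ, ∑ l ∈ Bx N, stmt0T p η l = ∑ l ∈ Bx N, stmt0F p η l := by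
    intro N
    have h1 : ∑ l ∈ Bx N, stmt0T p η (-l) = ∑ l ∈ Bx N, stmt0T p η l := by
      apply Finset.sum_equiv (Equiv.neg (ℤ × ℤ))
      · intro i
        simp only [hBx_def, Finset.mem_product, Finset.mem_Icc, Equiv.neg_apply,
          Prod.fst_neg, Prod.snd_neg]
        omega
      · intro i _
        simp [Equiv.neg_apply]
    have h2 : ∑ l ∈ Bx N, stmt0F p η l
        = (2:ℝ)⁻¹ • ((∑ l ∈ Bx N, stmt0T p η l) + ∑ l ∈ Bx N, stmt0T p η (-l)) := by
      rw [← Finset.sum_add_distrib, Finset.smul_sum]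
      rfl
    rw [h2, h1, ← two_smul ℝ (∑ l ∈ Bx N, stmt0T p η l), smul_smul]
    norm_num
  have hgoal : Tendsto (fun N : ℕ => ∑ l ∈ Bx N, stmt0T p η l) atTop (nhds L) :=
    hL'.congr (fun N => (hsymm N).symm)
  simpa only [stmt0T, stmt0R] using hgoal
end

section
/- There exists a constant C > 0 depending only on ε ∈ (0,1) such that for every η in [-1/2,1/2]² \ {0}, the absolute value of the lattice sum Σ_{l ∈ ℤ²} (η+l)^⊥/|η+l|^{3-ε} (understood as the limit of symmetric partial sums) is at most C |η|^{-2+ε}. -/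
open Filter

lemma rpow_diff_le {p : ℝ} (hp : p < 0) {r u v : ℝ} (hr : 0 < r) (hu : r ≤ u) (hv : r ≤ v) :
    |u ^ p - v ^ p| ≤ (-p) * r ^ (p - 1) * |u - v| := by
  have key := Convex.norm_image_sub_le_of_norm_hasDerivWithin_le
    (f := fun x : ℝ => x ^ p) (f' := fun x => p * x ^ (p - 1)) (s := Set.Ici r)
    (C := (-p) * r ^ (p - 1))
    (fun x hx => (Real.hasDerivAt_rpow_const
      (Or.inl (ne_of_gt (lt_of_lt_of_le hr hx)))).hasDerivWithinAt)
    (fun x hx => by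
      have hx0 : (0:ℝ) < x := lt_of_lt_of_le hr hx
      have h1 : x ^ (p - 1) ≤ r ^ (p - 1) :=
        Real.rpow_le_rpow_of_nonpos hr hx (by linarith)
      have h2 : (0:ℝ) ≤ x ^ (p-1) := (Real.rpow_pos_of_pos hx0 _).le
      rw [Real.norm_eq_abs, abs_mul, abs_of_neg hp, abs_of_nonneg h2]
      nlinarith)
    (convex_Ici r) hv hu
  simpa [Real.norm_eq_abs] using key

lemma smul_split (a b : ℝ) (u v : ℂ) : a • u - b • v = a • (u - v) + (a - b) • v := by
  rw [smul_sub, sub_smul]; abel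

lemma pair_bound {p : ℝ} (hp3 : -3 ≤ p) (hp : p < 0) {lam e : ℂ}
    (hl : 1 ≤ ‖lam‖) (he : ‖e‖ ≤ 3/4) :
    ‖(‖lam + e‖ ^ p) • (Complex.I * (lam + e))
      - (‖lam - e‖ ^ p) • (Complex.I * (lam - e))‖
      ≤ 2400 * ‖lam‖ ^ p := by
  set A := ‖lam‖ with hA
  set z := lam + e
  set w := lam - e
  have hA0 : (0:ℝ) < A := lt_of_lt_of_le one_pos hl
  set r := A / 4 with hrdef
  have hr : (0:ℝ) < r := by positivity
  have hz : r ≤ ‖z‖ := by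
    have h1 : A ≤ ‖z‖ + ‖e‖ := by
      calc A = ‖z - e‖ := by rw [hA]; congr 1; ring
      _ ≤ ‖z‖ + ‖e‖ := by
        simpa using norm_sub_le z e
    simp only [hrdef]; linarith
  have hw : r ≤ ‖w‖ := by
    have h1 : A ≤ ‖w‖ + ‖e‖ := by
      calc A = ‖w + e‖ := by rw [hA]; congr 1; ring
      _ ≤ ‖w‖ + ‖e‖ := norm_add_le w e
    simp only [hrdef]; linarith
  have hw2 : ‖w‖ ≤ 2 * A := by
    have h1 : ‖w‖ ≤ ‖lam‖ + ‖e‖ := by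
      simpa using norm_sub_le lam e
    linarith
  have hzw : ‖z - w‖ ≤ 3/2 := by
    have : z - w = 2 * e := by simp only [z, w]; ring
    rw [this, norm_mul]
    simp only [Complex.norm_two]
    linarith
  set a := ‖z‖ ^ p with ha
  set b := ‖w‖ ^ p with hb
  have keyeq : a • (Complex.I * z) - b • (Complex.I * w)
      = a • (Complex.I * (z - w)) + (a - b) • (Complex.I * w) := by
    have hm : Complex.I * (z - w) = Complex.I * z - Complex.I * w := mul_sub _ _ _
    rw [hm]; exact smul_split a b _ _
  rw [keyeq]
  have n1 : ‖a • (Complex.I * (z - w))‖ ≤ r ^ p * (3/2) := by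
    rw [norm_smul, Real.norm_eq_abs, abs_of_nonneg (Real.rpow_nonneg (norm_nonneg _) _)]
    have h1 : a ≤ r ^ p := Real.rpow_le_rpow_of_nonpos hr hz hp.le
    have h2 : ‖Complex.I * (z - w)‖ ≤ 3/2 := by
      rw [norm_mul, Complex.norm_I, one_mul]; exact hzw
    have h3 : (0:ℝ) ≤ a := Real.rpow_nonneg (norm_nonneg _) _
    have h4 : (0:ℝ) ≤ ‖Complex.I * (z - w)‖ := norm_nonneg _
    nlinarith [Real.rpow_pos_of_pos hr p]
  have n2 : ‖(a - b) • (Complex.I * w)‖ ≤ 36 * r ^ p := by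
    rw [norm_smul, Real.norm_eq_abs]
    have h3 : ‖Complex.I * w‖ = ‖w‖ := by
      rw [norm_mul, Complex.norm_I, one_mul]
    rw [h3]
    have hrp : r ^ (p - 1) = r ^ p / r := Real.rpow_sub_one hr.ne' p
    have hge : (0:ℝ) ≤ r ^ (p-1) := (Real.rpow_pos_of_pos hr _).le
    have habs : |‖z‖ - ‖w‖| ≤ 3/2 :=
      le_trans (abs_norm_sub_norm_le z w) hzw
    have h4 : |a - b| ≤ (9/2) * r ^ (p-1) := by
      calc |a - b| ≤ (-p) * r ^ (p-1) * |‖z‖ - ‖w‖| :=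
            rpow_diff_le hp hr hz hw
      _ ≤ (3 * r ^ (p-1)) * (3/2) := by
          apply mul_le_mul _ habs (abs_nonneg _) (by positivity)
          nlinarith
      _ = (9/2) * r ^ (p-1) := by ring
    calc |a - b| * ‖w‖ ≤ ((9/2) * r ^ (p-1)) * (2 * A) :=
          mul_le_mul h4 hw2 (norm_nonneg _) (by positivity)
    _ = 36 * r ^ p := by
        rw [hrp, hrdef]; field_simp; ring
  have rpA : r ^ p ≤ 64 * A ^ p := by
    rw [hrdef, Real.div_rpow hA0.le (by norm_num)]
    have h1 : (4:ℝ) ^ (-3 : ℝ) ≤ 4 ^ p :=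
      Real.rpow_le_rpow_of_exponent_le (by norm_num) hp3
    have h2 : (4:ℝ) ^ (-3:ℝ) = 1/64 := by
      rw [show (-3:ℝ) = ((-3:ℤ):ℝ) by norm_num, Real.rpow_intCast]
      norm_num
    have h3 : (0:ℝ) < (4:ℝ)^p := Real.rpow_pos_of_pos (by norm_num) p
    have h4 : (0:ℝ) ≤ A ^ p := Real.rpow_nonneg hA0.le p
    rw [div_le_iff₀ h3]
    rw [h2] at h1
    nlinarith [mul_nonneg h4 (sub_nonneg.mpr (by linarith : (1:ℝ) ≤ 64 * (4:ℝ)^p))]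
  calc ‖a • (Complex.I * (z - w)) + (a - b) • (Complex.I * w)‖
      ≤ ‖a • (Complex.I * (z - w))‖ + ‖(a - b) • (Complex.I * w)‖ := norm_add_le _ _
  _ ≤ r ^ p * (3/2) + 36 * r ^ p := by linarith
  _ = 37.5 * r ^ p := by ring
  _ ≤ 2400 * A ^ p := by nlinarith [Real.rpow_pos_of_pos hr p]

lemma summable_G {k : ℝ} (hk : 2 < k) :
    Summable fun l : ℤ × ℤ => ‖(![l.1, l.2] : Fin 2 → ℤ)‖ ^ (-k) := by
  have h := EisensteinSeries.summable_one_div_norm_rpow hk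
  have h2 := ((finTwoArrowEquiv ℤ).symm.summable_iff).mpr h
  refine h2.congr fun l => ?_
  simp [Function.comp, finTwoArrowEquiv, Real.rpow_neg (norm_nonneg _), one_div]

noncomputable def gC (p : ℝ) (z : ℂ) : ℂ := (‖z‖ ^ p) • (Complex.I * z)

lemma gC_pair_bound {p : ℝ} (hp3 : -3 ≤ p) (hp : p < 0) {lam e : ℂ}
    (hl : 1 ≤ ‖lam‖) (he : ‖e‖ ≤ 3/4) :
    ‖gC p (lam + e) - gC p (lam - e)‖ ≤ 2400 * ‖lam‖ ^ p :=
  pair_bound hp3 hp hl he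

lemma gC_odd (p : ℝ) (z : ℂ) : gC p (-z) = - gC p z := by
  simp [gC, smul_neg, mul_neg]

set_option maxHeartbeats 2000000 in
/-- There exists a constant `C > 0` depending only on `ε ∈ (0,1)` such that for
every `η ∈ [-1/2,1/2]² \ {0}`, the absolute value of the lattice sum
`∑_{l ∈ ℤ²} (η+l)^⊥ / |η+l|^{3-ε}` (understood as the limit of symmetric partial sums)
is at most `C |η|^{-2+ε}`. -/
theorem stmt1 (ε : ℝ) (hε : 0 < ε) (hε1 : ε < 1) :
    ∃ C : ℝ, 0 < C ∧ ∀ η : ℝ × ℝ,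
      η ∈ Set.Icc ((-(1:ℝ)/2, -(1:ℝ)/2)) ((1/2 : ℝ), (1/2 : ℝ)) → η ≠ 0 →
      ∀ L : ℝ × ℝ, Tendsto (fun N : ℕ =>
          ∑ l ∈ Finset.Icc (-(N:ℤ)) (N:ℤ) ×ˢ Finset.Icc (-(N:ℤ)) (N:ℤ),
            (Real.sqrt ((η.1 + (l.1 : ℝ))^2 + (η.2 + (l.2 : ℝ))^2)) ^ (-(3 - ε)) •
              ((-(η.2 + (l.2 : ℝ)), η.1 + (l.1 : ℝ)) : ℝ × ℝ))
        atTop (nhds L) →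
      Real.sqrt (L.1^2 + L.2^2) ≤ C * (Real.sqrt (η.1^2 + η.2^2)) ^ (-2 + ε) := by
  obtain ⟨p, hpdef⟩ : ∃ p : ℝ, p = ε - 3 := ⟨_, rfl⟩
  obtain ⟨k, hkdef⟩ : ∃ k : ℝ, k = 3 - ε := ⟨_, rfl⟩
  have hp : p < 0 := by rw [hpdef]; linarith
  have hp3 : -3 ≤ p := by rw [hpdef]; linarith
  have hpk : p = -k := by rw [hpdef, hkdef]; ring
  have hksum : 2 < k := by rw [hkdef]; linarith
  obtain ⟨T, hTdef⟩ : ∃ T : ℝ, T = ∑' l : ℤ × ℤ, ‖(![l.1, l.2] : Fin 2 → ℤ)‖ ^ (-k) := ⟨_, rfl⟩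
  have hT0 : 0 ≤ T := hTdef ▸ tsum_nonneg fun l => Real.rpow_nonneg (norm_nonneg _) _
  refine ⟨1 + 1200 * T, by linarith, ?_⟩
  intro η hmem hne L hL
  rw [Set.mem_Icc] at hmem
  obtain ⟨hlo, hhi⟩ := hmem
  have h11 : -(1:ℝ)/2 ≤ η.1 := hlo.1
  have h12 : η.1 ≤ 1/2 := hhi.1
  have h21 : -(1:ℝ)/2 ≤ η.2 := hlo.2
  have h22 : η.2 ≤ 1/2 := hhi.2
  set ec : ℂ := (η.1 : ℂ) + (η.2 : ℂ) * Complex.I with hec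
  have habsf : ∀ z : ℂ, ‖z‖ = Real.sqrt (z.re^2 + z.im^2) := fun z => by
    rw [Complex.norm_def, Complex.normSq_apply]; ring_nf
  have hecabs : ‖ec‖ = Real.sqrt (η.1^2 + η.2^2) := by
    rw [habsf]; simp [hec]
  have hene : ec ≠ 0 := by
    intro h0
    apply hne
    have hre := congrArg Complex.re h0
    have him := congrArg Complex.im h0
    simp [hec] at hre him
    exact Prod.ext hre him
  have hecpos : 0 < ‖ec‖ := norm_pos_iff.mpr hene
  have hecle : ‖ec‖ ≤ 3/4 := by
    rw [hecabs]
    have hb : η.1^2 + η.2^2 ≤ (9/16 : ℝ) := by nlinarith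
    calc Real.sqrt (η.1^2 + η.2^2) ≤ Real.sqrt (9/16) := Real.sqrt_le_sqrt hb
    _ = 3/4 := by
        rw [show (9/16:ℝ) = (3/4)^2 by norm_num, Real.sqrt_sq (by norm_num)]
  set lamc : ℤ × ℤ → ℂ := fun l => ((l.1 : ℝ) : ℂ) + ((l.2 : ℝ) : ℂ) * Complex.I with hlamc
  set φ := Complex.equivRealProdCLM.symm with hphi
  -- rewrite the partial sums through φ
  have hφsum : ∀ N : ℕ, φ (∑ l ∈ Finset.Icc (-(N:ℤ)) (N:ℤ) ×ˢ Finset.Icc (-(N:ℤ)) (N:ℤ),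
          (Real.sqrt ((η.1 + (l.1 : ℝ))^2 + (η.2 + (l.2 : ℝ))^2)) ^ (-(3 - ε)) •
            ((-(η.2 + (l.2 : ℝ)), η.1 + (l.1 : ℝ)) : ℝ × ℝ))
      = ∑ l ∈ Finset.Icc (-(N:ℤ)) (N:ℤ) ×ˢ Finset.Icc (-(N:ℤ)) (N:ℤ), gC p (lamc l + ec) := by
    intro N
    rw [map_sum]
    refine Finset.sum_congr rfl fun l _ => ?_
    rw [map_smul]
    have hre : (lamc l + ec).re = η.1 + (l.1:ℝ) := by simp [hlamc, hec]; ring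
    have him : (lamc l + ec).im = η.2 + (l.2:ℝ) := by simp [hlamc, hec]; ring
    have hbase : Real.sqrt ((η.1 + (l.1 : ℝ))^2 + (η.2 + (l.2 : ℝ))^2)
        = ‖lamc l + ec‖ := by
      rw [habsf, hre, him]
    have hexp : -(3 - ε) = p := by rw [hpdef]; ring
    have hvec : φ ((-(η.2 + (l.2 : ℝ)), η.1 + (l.1 : ℝ)) : ℝ × ℝ)
        = Complex.I * (lamc l + ec) := by
      apply Complex.ext
      · simp [hphi, Complex.equivRealProdCLM_symm_apply, hre, him]
      · simp [hphi, Complex.equivRealProdCLM_symm_apply, hre, him]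
    rw [hbase, hexp, hvec, gC]
  -- uniform bound on partial sums
  have hbound : ∀ N : ℕ,
      ‖∑ l ∈ Finset.Icc (-(N:ℤ)) (N:ℤ) ×ˢ Finset.Icc (-(N:ℤ)) (N:ℤ), gC p (lamc l + ec)‖
        ≤ ‖ec‖ ^ (p+1) + 1200 * T := by
    intro N
    set bx := Finset.Icc (-(N:ℤ)) (N:ℤ) ×ˢ Finset.Icc (-(N:ℤ)) (N:ℤ) with hbx
    have h0bx : (0 : ℤ × ℤ) ∈ bx := by
      simp only [hbx, Finset.mem_product, Finset.mem_Icc, Prod.fst_zero, Prod.snd_zero]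
      omega
    rw [← Finset.add_sum_erase bx _ h0bx]
    have hlam0 : lamc 0 + ec = ec := by simp [hlamc]
    set S' := ∑ l ∈ bx.erase 0, gC p (lamc l + ec) with hS'
    have hmemneg : ∀ l : ℤ × ℤ, l ∈ bx.erase 0 → -l ∈ bx.erase 0 := by
      intro l hl
      simp only [hbx, Finset.mem_erase, Finset.mem_product, Finset.mem_Icc, ne_eq,
        Prod.fst_neg, Prod.snd_neg, neg_eq_zero] at *
      obtain ⟨hne0, ⟨ha, hb⟩, hc, hd⟩ := hl
      exact ⟨hne0, ⟨by omega, by omega⟩, by omega, by omega⟩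
    have hflip : S' = ∑ l ∈ bx.erase 0, gC p (lamc (-l) + ec) := by
      rw [hS']
      refine Finset.sum_equiv (Equiv.neg (ℤ × ℤ)) (fun i => ?_) (fun i _ => ?_)
      · constructor
        · intro h; exact hmemneg i h
        · intro h; simpa using hmemneg (-i) h
      · simp [neg_neg]
    have hlamneg : ∀ l : ℤ × ℤ, lamc (-l) + ec = -(lamc l - ec) := by
      intro l
      simp only [hlamc, Prod.fst_neg, Prod.snd_neg, Int.cast_neg]
      push_cast
      ring
    have hneg : ∑ l ∈ bx.erase 0, gC p (lamc l - ec) = -S' := by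
      rw [hflip, ← Finset.sum_neg_distrib]
      refine Finset.sum_congr rfl fun l _ => ?_
      rw [hlamneg, gC_odd, neg_neg]
    have h2S : S' + S' = ∑ l ∈ bx.erase 0, (gC p (lamc l + ec) - gC p (lamc l - ec)) := by
      rw [Finset.sum_sub_distrib, hneg, sub_neg_eq_add, hS']
    have hterm : ∀ l ∈ bx.erase 0,
        ‖gC p (lamc l + ec) - gC p (lamc l - ec)‖
          ≤ 2400 * ‖(![l.1, l.2] : Fin 2 → ℤ)‖ ^ (-k) := by
      intro l hl
      have hlne : l ≠ 0 := (Finset.mem_erase.mp hl).1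
      have hl12 : l.1 ≠ 0 ∨ l.2 ≠ 0 := by
        by_contra hcon
        push_neg at hcon
        exact hlne (Prod.ext hcon.1 hcon.2)
      have habslam : ‖lamc l‖ = Real.sqrt ((l.1:ℝ)^2 + (l.2:ℝ)^2) := by
        rw [habsf]; simp [hlamc]
      have hsq1 : (1:ℝ) ≤ (l.1:ℝ)^2 + (l.2:ℝ)^2 := by
        have : (1:ℤ) ≤ l.1^2 + l.2^2 := by
          rcases hl12 with h | h
          · nlinarith [sq_nonneg l.2, Int.one_le_abs h, sq_abs l.1, abs_nonneg l.1]
          · nlinarith [sq_nonneg l.1, Int.one_le_abs h, sq_abs l.2, abs_nonneg l.2]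
        exact_mod_cast this
      have hl1 : 1 ≤ ‖lamc l‖ := by
        rw [habslam]
        calc (1:ℝ) = Real.sqrt 1 := Real.sqrt_one.symm
        _ ≤ _ := Real.sqrt_le_sqrt hsq1
      have hn1 : 1 ≤ ‖(![l.1, l.2] : Fin 2 → ℤ)‖ := by
        rw [EisensteinSeries.norm_eq_max_natAbs]
        have : 1 ≤ max (l.1.natAbs) (l.2.natAbs) := by
          rcases hl12 with h | h
          · have := Int.natAbs_pos.mpr h; omega
          · have := Int.natAbs_pos.mpr h; omega
        simp only [Matrix.cons_val_zero, Matrix.cons_val_one, Matrix.head_cons]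
        exact_mod_cast Nat.one_le_cast.mpr this
      have hxle : ‖(![l.1, l.2] : Fin 2 → ℤ)‖ ≤ ‖lamc l‖ := by
        rw [EisensteinSeries.norm_eq_max_natAbs, habslam]
        simp only [Matrix.cons_val_zero, Matrix.cons_val_one, Matrix.head_cons, Nat.cast_max]
        apply max_le
        · rw [show ((l.1.natAbs : ℕ) : ℝ) = |(l.1:ℝ)| by rw [Nat.cast_natAbs]; push_cast; ring]
          exact Real.abs_le_sqrt (by nlinarith [sq_nonneg ((l.2:ℝ))])
        · rw [show ((l.2.natAbs : ℕ) : ℝ) = |(l.2:ℝ)| by rw [Nat.cast_natAbs]; push_cast; ring]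
          exact Real.abs_le_sqrt (by nlinarith [sq_nonneg ((l.1:ℝ))])
      have hGle : ‖lamc l‖ ^ p ≤ ‖(![l.1, l.2] : Fin 2 → ℤ)‖ ^ (-k) := by
        rw [← hpk]
        exact Real.rpow_le_rpow_of_nonpos (lt_of_lt_of_le one_pos hn1) hxle hp.le
      calc ‖gC p (lamc l + ec) - gC p (lamc l - ec)‖
          ≤ 2400 * ‖lamc l‖ ^ p := gC_pair_bound hp3 hp hl1 hecle
      _ ≤ 2400 * ‖(![l.1, l.2] : Fin 2 → ℤ)‖ ^ (-k) := by linarith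
    have hsum2 : ‖S' + S'‖ ≤ 2400 * T := by
      rw [h2S]
      calc ‖∑ l ∈ bx.erase 0, (gC p (lamc l + ec) - gC p (lamc l - ec))‖
          ≤ ∑ l ∈ bx.erase 0, ‖gC p (lamc l + ec) - gC p (lamc l - ec)‖ :=
            norm_sum_le _ _
      _ ≤ ∑ l ∈ bx.erase 0, 2400 * ‖(![l.1, l.2] : Fin 2 → ℤ)‖ ^ (-k) :=
            Finset.sum_le_sum hterm
      _ = 2400 * ∑ l ∈ bx.erase 0, ‖(![l.1, l.2] : Fin 2 → ℤ)‖ ^ (-k) := by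
            rw [Finset.mul_sum]
      _ ≤ 2400 * T := by
            rw [hTdef]
            have := (summable_G hksum).sum_le_tsum (bx.erase 0)
              (fun l _ => Real.rpow_nonneg (norm_nonneg _) (-k))
            linarith
    have hS'le : ‖S'‖ ≤ 1200 * T := by
      have h2 : (2:ℝ) * ‖S'‖ = ‖S' + S'‖ := by
        rw [← two_smul ℝ S', norm_smul]
        simp
      linarith
    have hhead : ‖gC p (lamc 0 + ec)‖ = ‖ec‖ ^ (p+1) := by
      rw [hlam0, gC, norm_smul, Real.norm_eq_abs,
        abs_of_nonneg (Real.rpow_nonneg (norm_nonneg _) _)]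
      rw [show ‖Complex.I * ec‖ = ‖ec‖ by
        rw [norm_mul, Complex.norm_I, one_mul]]
      rw [Real.rpow_add_one hecpos.ne' p]
    calc ‖gC p (lamc 0 + ec) + S'‖ ≤ ‖gC p (lamc 0 + ec)‖ + ‖S'‖ := norm_add_le _ _
    _ ≤ ‖ec‖ ^ (p+1) + 1200 * T := by rw [hhead]; linarith
  -- pass to the limit
  have hLc : Tendsto (fun N : ℕ =>
      ∑ l ∈ Finset.Icc (-(N:ℤ)) (N:ℤ) ×ˢ Finset.Icc (-(N:ℤ)) (N:ℤ), gC p (lamc l + ec))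
      atTop (nhds (φ L)) := by
    have := (Tendsto.comp (φ.continuous.tendsto L) hL)
    exact this.congr hφsum
  have hLle : ‖φ L‖ ≤ ‖ec‖ ^ (p+1) + 1200 * T :=
    le_of_tendsto hLc.norm (Filter.Eventually.of_forall hbound)
  have hLeq : Real.sqrt (L.1^2 + L.2^2) = ‖φ L‖ := by
    rw [habsf]
    simp [hphi, Complex.equivRealProdCLM_symm_apply]
  have h1le : 1 ≤ ‖ec‖ ^ (p+1) :=
    Real.one_le_rpow_of_pos_of_le_one_of_nonpos hecpos (hecle.trans (by norm_num))
      (by rw [hpdef]; linarith)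
  have hrhs : (Real.sqrt (η.1^2 + η.2^2)) ^ (-2 + ε) = ‖ec‖ ^ (p+1) := by
    rw [← hecabs, show (-2 + ε : ℝ) = p + 1 by rw [hpdef]; ring]
  rw [hLeq, hrhs]
  nlinarith
end

section
/- Let K : ℝ² → ℝ² satisfy |K(x)| ≤ C/|x|^{2-ε} for all x ≠ 0, where 0 < ε < 1. Then for every φ ∈ C_c²(ℝ²), the function H_φ(x,y) = (1/2) K(x-y) · (∇φ(x) - ∇φ(y)) belongs to L²(ℝ² × ℝ²). -/
open scoped Classical

open MeasureTheory

open Metric Set Real Module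
open scoped ENNReal

lemma aux_finite_ball {E : Type*} [NormedAddCommGroup E] [NormedSpace ℝ E]
    [FiniteDimensional ℝ E] [MeasurableSpace E] [BorelSpace E]
    (μ : Measure E) [μ.IsAddHaarMeasure] {a : ℝ} (ha : 0 < a)
    (han : a < finrank ℝ E) :
    ∫⁻ x in Metric.ball (0 : E) 1, ENNReal.ofReal (‖x‖ ^ (-a)) ∂μ < ∞ := by
  have hmeas : Measurable fun x : E => ‖x‖ ^ (-a) := by fun_prop
  have hnn : (0 : E → ℝ) ≤ fun x => ‖x‖ ^ (-a) := fun x => by positivity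
  rw [lintegral_eq_lintegral_meas_le (μ.restrict (ball 0 1))
    (Filter.Eventually.of_forall hnn) hmeas.aemeasurable]
  have hBfin : μ (ball (0 : E) 1) < ∞ := measure_ball_lt_top
  calc ∫⁻ t in Ioi (0:ℝ), μ.restrict (ball 0 1) {x : E | t ≤ ‖x‖ ^ (-a)}
      ≤ ∫⁻ t in Ioc (0:ℝ) 1 ∪ Ioi 1, μ.restrict (ball 0 1) {x : E | t ≤ ‖x‖ ^ (-a)} :=
        lintegral_mono_set Ioi_subset_Ioc_union_Ioi
    _ ≤ (∫⁻ t in Ioc (0:ℝ) 1, μ.restrict (ball 0 1) {x : E | t ≤ ‖x‖ ^ (-a)})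
        + ∫⁻ t in Ioi (1:ℝ), μ.restrict (ball 0 1) {x : E | t ≤ ‖x‖ ^ (-a)} :=
        lintegral_union_le _ _ _
    _ < ∞ := by
        refine ENNReal.add_lt_top.2 ⟨?_, ?_⟩
        · calc (∫⁻ t in Ioc (0:ℝ) 1, μ.restrict (ball 0 1) {x : E | t ≤ ‖x‖ ^ (-a)})
              ≤ ∫⁻ _t in Ioc (0:ℝ) 1, μ (ball (0:E) 1) := by
                refine setLIntegral_mono' measurableSet_Ioc fun t _ => ?_
                exact (measure_mono (subset_univ _)).trans
                  (by rw [Measure.restrict_apply_univ])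
            _ = μ (ball (0:E) 1) * volume (Ioc (0:ℝ) 1) := by
                rw [setLIntegral_const]
            _ < ∞ := by
                apply ENNReal.mul_lt_top hBfin
                simp [Real.volume_Ioc]
        · have key : ∀ t ∈ Ioi (1:ℝ), μ.restrict (ball 0 1) {x : E | t ≤ ‖x‖ ^ (-a)}
              ≤ ENNReal.ofReal (t ^ (-(a⁻¹ * finrank ℝ E))) * μ (ball (0:E) 1) := by
            intro t ht
            have ht0 : (0:ℝ) < t := lt_trans one_pos ht
            have hsub : {x : E | t ≤ ‖x‖ ^ (-a)} ⊆ closedBall (0:E) (t ^ (-a⁻¹)) := by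
              intro x hx
              simp only [mem_setOf_eq] at hx
              rcases eq_or_lt_of_le (norm_nonneg x) with h0 | h0
              · simp [mem_closedBall, dist_zero_right, ← h0]
                positivity
              · have : (‖x‖ ^ (-a)) ^ (-a⁻¹) ≤ t ^ (-a⁻¹) :=
                  Real.rpow_le_rpow_of_nonpos ht0 hx (neg_nonpos.mpr (inv_nonneg.mpr ha.le))
                rw [← Real.rpow_mul (norm_nonneg x)] at this
                rw [neg_mul_neg, mul_inv_cancel₀ ha.ne', Real.rpow_one] at this
                simpa [mem_closedBall, dist_zero_right] using this
            calc μ.restrict (ball 0 1) {x : E | t ≤ ‖x‖ ^ (-a)}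
                ≤ μ {x : E | t ≤ ‖x‖ ^ (-a)} := Measure.restrict_le_self _
              _ ≤ μ (closedBall (0:E) (t ^ (-a⁻¹))) := measure_mono hsub
              _ = ENNReal.ofReal ((t ^ (-a⁻¹)) ^ finrank ℝ E) * μ (ball (0:E) 1) :=
                  Measure.addHaar_closedBall μ 0 (by positivity)
              _ = ENNReal.ofReal (t ^ (-(a⁻¹ * finrank ℝ E))) * μ (ball (0:E) 1) := by
                  rw [← Real.rpow_natCast (t ^ (-a⁻¹)) (finrank ℝ E),
                    ← Real.rpow_mul ht0.le, neg_mul]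
          calc (∫⁻ t in Ioi (1:ℝ), μ.restrict (ball 0 1) {x : E | t ≤ ‖x‖ ^ (-a)})
              ≤ ∫⁻ t in Ioi (1:ℝ),
                  ENNReal.ofReal (t ^ (-(a⁻¹ * finrank ℝ E))) * μ (ball (0:E) 1) :=
                setLIntegral_mono' measurableSet_Ioi key
            _ = (∫⁻ t in Ioi (1:ℝ), ENNReal.ofReal (t ^ (-(a⁻¹ * finrank ℝ E))))
                  * μ (ball (0:E) 1) := lintegral_mul_const' _ _ hBfin.ne
            _ < ∞ := by
                apply ENNReal.mul_lt_top _ hBfin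
                apply IntegrableOn.setLIntegral_lt_top
                apply integrableOn_Ioi_rpow_of_lt _ one_pos
                rw [neg_lt, neg_neg, lt_inv_mul_iff₀ ha, mul_one]
                exact han

/-- Let `K : ℝ² → ℝ²` satisfy `|K(x)| ≤ C/|x|^{2-ε}` for all `x ≠ 0`, where
`0 < ε < 1`. Then for every `φ ∈ C²_c(ℝ²)`, the function
`H_φ(x,y) = (1/2) ⟨K(x-y), ∇φ(x) - ∇φ(y)⟩` (set to `0` on the diagonal) belongs to
`L²(ℝ² × ℝ²)`. -/
theorem stmt3 (ε : ℝ) (hε : 0 < ε) (hε1 : ε < 1)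
    (C : ℝ) (K : EuclideanSpace ℝ (Fin 2) → EuclideanSpace ℝ (Fin 2))
    (hK : ∀ x : EuclideanSpace ℝ (Fin 2), x ≠ 0 → ‖K x‖ ≤ C / ‖x‖ ^ (2 - ε))
    (hKm : Measurable K)
    (φ : EuclideanSpace ℝ (Fin 2) → ℝ) (hφ : ContDiff ℝ 2 φ) (hφc : HasCompactSupport φ) :
    MemLp (fun p : EuclideanSpace ℝ (Fin 2) × EuclideanSpace ℝ (Fin 2) =>
        if p.1 = p.2 then 0 else
          (1/2) * (inner ℝ (K (p.1 - p.2)) (gradient φ p.1 - gradient φ p.2) : ℝ))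
      2 volume := by
  have hC : 0 ≤ C := by
    have h1 : ‖(EuclideanSpace.single 0 1 : EuclideanSpace ℝ (Fin 2))‖ = 1 := by
      simp [EuclideanSpace.norm_single]
    have h2 := hK (EuclideanSpace.single 0 1) (by
      intro h; rw [h] at h1; simp at h1)
    rw [h1, Real.one_rpow] at h2
    exact le_trans (norm_nonneg _) (by simpa using h2)
  set G := gradient φ with hG
  have hGeq : ∀ x, G x = (InnerProductSpace.toDual ℝ (EuclideanSpace ℝ (Fin 2))).symm (fderiv ℝ φ x) := fun x => rfl
  have hfd1 : ContDiff ℝ 1 (fderiv ℝ φ) := hφ.fderiv_right (m := 1) (by norm_num)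
  have hGcont : Continuous G :=
    (InnerProductSpace.toDual ℝ (EuclideanSpace ℝ (Fin 2))).symm.continuous.comp (hfd1.continuous)
  have hfdc : HasCompactSupport (fderiv ℝ φ) := hφc.fderiv (𝕜 := ℝ)
  have hGcs : HasCompactSupport G := hfdc.comp_left (map_zero _)
  obtain ⟨M0, hM0⟩ := hGcs.exists_bound_of_continuous hGcont
  set M := max M0 0 with hMdef
  have hM : ∀ x, ‖G x‖ ≤ M := fun x => le_trans (hM0 x) (le_max_left _ _)
  have hMnn : (0:ℝ) ≤ M := le_max_right _ _
  obtain ⟨L1, hL1⟩ := ContDiff.lipschitzWith_of_hasCompactSupport hfdc hfd1 one_ne_zero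
  obtain ⟨L0, hL0⟩ : ∃ L0 : ℝ, L0 = L1 := ⟨_, rfl⟩
  have hlip : LipschitzWith L0.toNNReal (fderiv ℝ φ) := by
    subst hL0; simpa using hL1
  set L := max L0 0 with hLdef
  have hLnn : (0:ℝ) ≤ L := le_max_right _ _
  have hGlip : ∀ x y, ‖G x - G y‖ ≤ L * ‖x - y‖ := by
    intro x y
    have h1 : ‖G x - G y‖ = ‖fderiv ℝ φ x - fderiv ℝ φ y‖ := by
      rw [hGeq, hGeq, ← map_sub]
      exact LinearIsometryEquiv.norm_map _ _
    rw [h1]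
    have h2 := hlip.dist_le_mul x y
    rw [dist_eq_norm, dist_eq_norm, Real.coe_toNNReal'] at h2
    exact h2
  set D := C * max L (2*M) / 2 with hD
  have hmaxnn : (0:ℝ) ≤ max L (2*M) := le_trans hLnn (le_max_left _ _)
  have hDnn : 0 ≤ D := div_nonneg (mul_nonneg hC hmaxnn) (by norm_num)
  set S := tsupport G with hS
  have hSmeas : MeasurableSet S := (isClosed_tsupport G).measurableSet
  have hSfin : volume S < ∞ := hGcs.measure_lt_top
  set b : EuclideanSpace ℝ (Fin 2) → ℝ :=
    fun z => D * min (‖z‖ ^ (ε-1)) (‖z‖ ^ (ε-2)) with hb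
  have hbnn : ∀ z, 0 ≤ b z := fun z =>
    mul_nonneg hDnn (le_min (Real.rpow_nonneg (norm_nonneg _) _)
      (Real.rpow_nonneg (norm_nonneg _) _))
  have key : ∀ x y : EuclideanSpace ℝ (Fin 2), x ≠ y →
      |(1/2) * (inner ℝ (K (x - y)) (G x - G y) : ℝ)| ≤ b (x - y) := by
    intro x y hxy
    set z := x - y with hz'
    have hzne : z ≠ 0 := sub_ne_zero.mpr hxy
    have hr : 0 < ‖z‖ := norm_pos_iff.mpr hzne
    have h1 : |(1/2) * (inner ℝ (K z) (G x - G y) : ℝ)|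
        ≤ (1/2) * (‖K z‖ * ‖G x - G y‖) := by
      rw [abs_mul, show |(1:ℝ)/2| = 1/2 by norm_num]
      exact mul_le_mul_of_nonneg_left (abs_real_inner_le_norm _ _) (by norm_num)
    refine h1.trans ?_
    have h2 : ‖K z‖ ≤ C * ‖z‖ ^ (ε - 2) := by
      have h := hK z hzne
      rwa [div_eq_mul_inv, ← Real.rpow_neg (norm_nonneg z), neg_sub] at h
    have h3 : ‖G x - G y‖ ≤ min (L * ‖z‖) (2 * M) := by
      refine le_min (hGlip x y) ?_
      calc ‖G x - G y‖ ≤ ‖G x‖ + ‖G y‖ := norm_sub_le _ _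
        _ ≤ M + M := add_le_add (hM x) (hM y)
        _ = 2 * M := by ring
    have h4 : ‖K z‖ * ‖G x - G y‖ ≤ (C * ‖z‖ ^ (ε-2)) * min (L * ‖z‖) (2 * M) :=
      mul_le_mul h2 h3 (norm_nonneg _) (by positivity)
    have h5 : min (L * ‖z‖) (2 * M) ≤ max L (2*M) * min (‖z‖) 1 := by
      rw [mul_min_of_nonneg _ _ hmaxnn]
      refine min_le_min (mul_le_mul_of_nonneg_right (le_max_left _ _) (norm_nonneg _)) ?_
      simpa using le_max_right L (2*M)
    have h6 : ‖z‖ ^ (ε-2) * min (‖z‖) 1 = min (‖z‖ ^ (ε-1)) (‖z‖ ^ (ε-2)) := by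
      rw [mul_min_of_nonneg _ _ (Real.rpow_nonneg (norm_nonneg _) _)]
      congr 1
      · rw [show ε-1 = (ε-2)+1 by ring, Real.rpow_add_one hr.ne']
      · rw [mul_one]
    calc (1/2) * (‖K z‖ * ‖G x - G y‖)
        ≤ (1/2) * ((C * ‖z‖ ^ (ε-2)) * (max L (2*M) * min (‖z‖) 1)) := by
          refine mul_le_mul_of_nonneg_left (h4.trans ?_) (by norm_num)
          exact mul_le_mul_of_nonneg_left h5 (by positivity)
      _ = b z := by simp only [hb, hD]; rw [← h6]; ring
  -- measurability of the function
  have hdiag : MeasurableSet {p : EuclideanSpace ℝ (Fin 2) × EuclideanSpace ℝ (Fin 2) |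
      p.1 = p.2} := (isClosed_eq continuous_fst continuous_snd).measurableSet
  have hf_meas : Measurable (fun p : EuclideanSpace ℝ (Fin 2) × EuclideanSpace ℝ (Fin 2) =>
      if p.1 = p.2 then (0:ℝ) else
        (1/2) * (inner ℝ (K (p.1 - p.2)) (G p.1 - G p.2) : ℝ)) := by
    refine Measurable.ite hdiag measurable_const ?_
    refine Measurable.const_mul ?_ _
    exact Measurable.inner (hKm.comp (measurable_fst.sub measurable_snd))
      ((hGcont.measurable.comp measurable_fst).sub (hGcont.measurable.comp measurable_snd))
  refine ⟨hf_meas.aestronglyMeasurable, ?_⟩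
  rw [eLpNorm_lt_top_iff_lintegral_rpow_enorm_lt_top (by norm_num) (by norm_num)]
  simp only [ENNReal.toReal_ofNat]
  -- the dominating kernel
  set Hh : EuclideanSpace ℝ (Fin 2) → ℝ≥0∞ := fun z => ENNReal.ofReal (b z ^ 2) with hHh
  have hbm : Measurable b := by
    apply Measurable.const_mul
    exact (measurable_norm.pow_const _ |>.min (measurable_norm.pow_const _))
  have hHm : Measurable Hh := (hbm.pow_const 2).ennreal_ofReal
  set χ : EuclideanSpace ℝ (Fin 2) → ℝ≥0∞ := S.indicator 1 with hχ
  have hχm : Measurable χ := measurable_const.indicator hSmeas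
  -- pointwise bound
  have key2 : ∀ p : EuclideanSpace ℝ (Fin 2) × EuclideanSpace ℝ (Fin 2),
      (‖if p.1 = p.2 then (0:ℝ) else
        (1/2) * (inner ℝ (K (p.1 - p.2)) (G p.1 - G p.2) : ℝ)‖₊ : ℝ≥0∞) ^ (2:ℝ)
      ≤ (χ p.1 + χ p.2) * Hh (p.1 - p.2) := by
    intro p
    by_cases hd : p.1 = p.2
    · simp only [if_pos hd, nnnorm_zero, ENNReal.coe_zero]
      rw [ENNReal.zero_rpow_of_pos (by norm_num)]
      exact zero_le
    · by_cases hmem : p.1 ∈ S ∨ p.2 ∈ S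
      · have h1 : (1:ℝ≥0∞) ≤ χ p.1 + χ p.2 := by
          rcases hmem with h | h
          · exact le_add_right (le_of_eq (by simp [hχ, indicator_of_mem h]))
          · exact le_add_left (le_of_eq (by simp [hχ, indicator_of_mem h]))
        calc ((‖if p.1 = p.2 then (0:ℝ) else
              (1/2) * (inner ℝ (K (p.1 - p.2)) (G p.1 - G p.2) : ℝ)‖₊ : ℝ≥0∞)) ^ (2:ℝ)
            ≤ Hh (p.1 - p.2) := by
              rw [← enorm_eq_nnnorm, ← ofReal_norm,
                ENNReal.ofReal_rpow_of_nonneg (norm_nonneg _) (by norm_num)]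
              apply ENNReal.ofReal_le_ofReal
              rw [if_neg hd, Real.norm_eq_abs, Real.rpow_two]
              exact pow_le_pow_left₀ (abs_nonneg _) (key p.1 p.2 hd) 2
          _ = 1 * Hh (p.1 - p.2) := (one_mul _).symm
          _ ≤ (χ p.1 + χ p.2) * Hh (p.1 - p.2) := mul_le_mul_left h1 _
      · push_neg at hmem
        have hg1 : G p.1 = 0 := image_eq_zero_of_notMem_tsupport hmem.1
        have hg2 : G p.2 = 0 := image_eq_zero_of_notMem_tsupport hmem.2
        simp only [if_neg hd, hg1, hg2, sub_zero, inner_zero_right, mul_zero,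
          nnnorm_zero, ENNReal.coe_zero]
        rw [ENNReal.zero_rpow_of_pos (by norm_num)]
        exact zero_le
  -- finiteness of the kernel integral
  have hI : (∫⁻ z : EuclideanSpace ℝ (Fin 2), Hh z) < ∞ := by
    rw [← lintegral_add_compl Hh (measurableSet_ball (x := (0 : EuclideanSpace ℝ (Fin 2))) (ε := 1))]
    refine ENNReal.add_lt_top.2 ⟨?_, ?_⟩
    · -- on the unit ball
      have hbd : ∀ z ∈ ball (0 : EuclideanSpace ℝ (Fin 2)) 1,
          Hh z ≤ ENNReal.ofReal (D^2) * ENNReal.ofReal (‖z‖ ^ (-(2-2*ε))) := by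
        intro z _
        rw [hHh]
        rw [← ENNReal.ofReal_mul (by positivity)]
        apply ENNReal.ofReal_le_ofReal
        rw [hb, mul_pow]
        apply mul_le_mul_of_nonneg_left _ (by positivity)
        calc (min (‖z‖ ^ (ε-1)) (‖z‖ ^ (ε-2)))^2 ≤ (‖z‖ ^ (ε-1))^2 := by
              apply pow_le_pow_left₀ _ (min_le_left _ _)
              exact le_min (Real.rpow_nonneg (norm_nonneg _) _)
                (Real.rpow_nonneg (norm_nonneg _) _)
          _ = ‖z‖ ^ (-(2-2*ε)) := by
              rw [← Real.rpow_natCast (‖z‖ ^ (ε-1)) 2, ← Real.rpow_mul (norm_nonneg _)]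
              norm_num; ring_nf
      calc ∫⁻ z in ball (0 : EuclideanSpace ℝ (Fin 2)) 1, Hh z
          ≤ ∫⁻ z in ball (0 : EuclideanSpace ℝ (Fin 2)) 1,
              ENNReal.ofReal (D^2) * ENNReal.ofReal (‖z‖ ^ (-(2-2*ε))) :=
            setLIntegral_mono' measurableSet_ball hbd
        _ = ENNReal.ofReal (D^2) * ∫⁻ z in ball (0 : EuclideanSpace ℝ (Fin 2)) 1,
              ENNReal.ofReal (‖z‖ ^ (-(2-2*ε))) := lintegral_const_mul' _ _ ENNReal.ofReal_ne_top
        _ < ∞ := by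
            apply ENNReal.mul_lt_top ENNReal.ofReal_lt_top
            apply aux_finite_ball volume (by linarith)
            rw [finrank_euclideanSpace_fin]
            push_cast
            linarith
    · -- off the unit ball
      have hbd : ∀ z ∈ (ball (0 : EuclideanSpace ℝ (Fin 2)) 1)ᶜ,
          Hh z ≤ ENNReal.ofReal (D^2 * 2 ^ ((4:ℝ)-2*ε)) *
            ENNReal.ofReal ((1 + ‖z‖) ^ (-((4:ℝ)-2*ε))) := by
        intro z hzc
        have hz1 : (1:ℝ) ≤ ‖z‖ := by
          simpa [mem_ball, dist_zero_right] using hzc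
        have hz0 : (0:ℝ) < ‖z‖ := lt_of_lt_of_le one_pos hz1
        rw [hHh, ← ENNReal.ofReal_mul (by positivity)]
        apply ENNReal.ofReal_le_ofReal
        have step1 : b z ^ 2 ≤ D^2 * ‖z‖ ^ (2*ε-4) := by
          rw [hb, mul_pow]
          apply mul_le_mul_of_nonneg_left _ (by positivity)
          calc (min (‖z‖ ^ (ε-1)) (‖z‖ ^ (ε-2)))^2 ≤ (‖z‖ ^ (ε-2))^2 := by
                apply pow_le_pow_left₀ _ (min_le_right _ _)
                exact le_min (Real.rpow_nonneg (norm_nonneg _) _)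
                  (Real.rpow_nonneg (norm_nonneg _) _)
            _ = ‖z‖ ^ (2*ε-4) := by
                rw [← Real.rpow_natCast (‖z‖ ^ (ε-2)) 2, ← Real.rpow_mul (norm_nonneg _)]
                norm_num; ring_nf
        have step2 : ‖z‖ ^ (2*ε-4) ≤ 2 ^ ((4:ℝ)-2*ε) * (1 + ‖z‖) ^ (-((4:ℝ)-2*ε)) := by
          have h12 : (1:ℝ) + ‖z‖ ≤ 2 * ‖z‖ := by linarith
          have ha : (2 * ‖z‖) ^ (-((4:ℝ)-2*ε)) ≤ (1 + ‖z‖) ^ (-((4:ℝ)-2*ε)) :=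
            Real.rpow_le_rpow_of_nonpos (by positivity) h12 (by linarith)
          have hb2 : (2 * ‖z‖ : ℝ) ^ (-((4:ℝ)-2*ε))
              = 2 ^ (-((4:ℝ)-2*ε)) * ‖z‖ ^ (-((4:ℝ)-2*ε)) :=
            Real.mul_rpow (by norm_num) (norm_nonneg _)
          have hc2 : (2:ℝ) ^ ((4:ℝ)-2*ε) * 2 ^ (-((4:ℝ)-2*ε)) = 1 := by
            rw [← Real.rpow_add (by norm_num)]
            norm_num
          have : ‖z‖ ^ (2*ε-4) = 2 ^ ((4:ℝ)-2*ε) * (2 ^ (-((4:ℝ)-2*ε)) * ‖z‖ ^ (-((4:ℝ)-2*ε))) := by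
            rw [← mul_assoc, hc2, one_mul]
            congr 1
            ring
          rw [this, ← hb2]
          exact mul_le_mul_of_nonneg_left ha (by positivity)
        calc b z ^ 2 ≤ D^2 * ‖z‖ ^ (2*ε-4) := step1
          _ ≤ D^2 * (2 ^ ((4:ℝ)-2*ε) * (1 + ‖z‖) ^ (-((4:ℝ)-2*ε))) :=
              mul_le_mul_of_nonneg_left step2 (by positivity)
          _ = D^2 * 2 ^ ((4:ℝ)-2*ε) * (1 + ‖z‖) ^ (-((4:ℝ)-2*ε)) := by ring
      calc ∫⁻ z in (ball (0 : EuclideanSpace ℝ (Fin 2)) 1)ᶜ, Hh z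
          ≤ ∫⁻ z in (ball (0 : EuclideanSpace ℝ (Fin 2)) 1)ᶜ,
              ENNReal.ofReal (D^2 * 2 ^ ((4:ℝ)-2*ε)) *
                ENNReal.ofReal ((1 + ‖z‖) ^ (-((4:ℝ)-2*ε))) :=
            setLIntegral_mono' measurableSet_ball.compl hbd
        _ = ENNReal.ofReal (D^2 * 2 ^ ((4:ℝ)-2*ε)) *
              ∫⁻ z in (ball (0 : EuclideanSpace ℝ (Fin 2)) 1)ᶜ,
                ENNReal.ofReal ((1 + ‖z‖) ^ (-((4:ℝ)-2*ε))) :=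
            lintegral_const_mul' _ _ ENNReal.ofReal_ne_top
        _ ≤ ENNReal.ofReal (D^2 * 2 ^ ((4:ℝ)-2*ε)) *
              ∫⁻ z : EuclideanSpace ℝ (Fin 2),
                ENNReal.ofReal ((1 + ‖z‖) ^ (-((4:ℝ)-2*ε))) :=
            mul_le_mul_right (setLIntegral_le_lintegral _ _) _
        _ < ∞ := by
            apply ENNReal.mul_lt_top ENNReal.ofReal_lt_top
            apply finite_integral_one_add_norm
            rw [finrank_euclideanSpace_fin]
            push_cast
            linarith
  -- Tonelli
  have hprodm : Measurable (fun p : EuclideanSpace ℝ (Fin 2) × EuclideanSpace ℝ (Fin 2) =>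
      χ p.1 * Hh (p.1 - p.2)) :=
    (hχm.comp measurable_fst).mul (hHm.comp (measurable_fst.sub measurable_snd))
  have hprodm2 : Measurable (fun p : EuclideanSpace ℝ (Fin 2) × EuclideanSpace ℝ (Fin 2) =>
      χ p.2 * Hh (p.1 - p.2)) :=
    (hχm.comp measurable_snd).mul (hHm.comp (measurable_fst.sub measurable_snd))
  calc ∫⁻ p : EuclideanSpace ℝ (Fin 2) × EuclideanSpace ℝ (Fin 2),
        (‖if p.1 = p.2 then (0:ℝ) else
          (1/2) * (inner ℝ (K (p.1 - p.2)) (G p.1 - G p.2) : ℝ)‖₊ : ℝ≥0∞) ^ (2:ℝ)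
      ≤ ∫⁻ p : EuclideanSpace ℝ (Fin 2) × EuclideanSpace ℝ (Fin 2),
          (χ p.1 + χ p.2) * Hh (p.1 - p.2) := lintegral_mono key2
    _ = (∫⁻ p : EuclideanSpace ℝ (Fin 2) × EuclideanSpace ℝ (Fin 2),
          χ p.1 * Hh (p.1 - p.2)) +
        ∫⁻ p : EuclideanSpace ℝ (Fin 2) × EuclideanSpace ℝ (Fin 2),
          χ p.2 * Hh (p.1 - p.2) := by
        simp_rw [add_mul]
        exact lintegral_add_left hprodm _
    _ < ∞ := by
        refine ENNReal.add_lt_top.2 ⟨?_, ?_⟩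
        · rw [Measure.volume_eq_prod, lintegral_prod _ hprodm.aemeasurable]
          have hinner : ∀ x : EuclideanSpace ℝ (Fin 2),
              (∫⁻ y, χ x * Hh (x - y)) = χ x * ∫⁻ z, Hh z := by
            intro x
            rw [lintegral_const_mul (χ x) (show Measurable fun y : EuclideanSpace ℝ (Fin 2) =>
              Hh (x - y) from hHm.comp (measurable_const.sub measurable_id))]
            congr 1
            exact (Measure.measurePreserving_sub_left volume x).lintegral_comp hHm
          simp_rw [hinner]
          rw [lintegral_mul_const _ hχm, hχ, lintegral_indicator_one hSmeas]
          exact ENNReal.mul_lt_top hSfin hI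
        · rw [Measure.volume_eq_prod, lintegral_prod_symm _ hprodm2.aemeasurable]
          have hinner : ∀ y : EuclideanSpace ℝ (Fin 2),
              (∫⁻ x, χ y * Hh (x - y)) = χ y * ∫⁻ z, Hh z := by
            intro y
            rw [lintegral_const_mul (χ y) (show Measurable fun x : EuclideanSpace ℝ (Fin 2) =>
              Hh (x - y) from hHm.comp (measurable_id.sub measurable_const))]
            congr 1
            exact (measurePreserving_sub_right volume y).lintegral_comp hHm
          simp_rw [hinner]
          rw [lintegral_mul_const _ hχm, hχ, lintegral_indicator_one hSmeas]
          exact ENNReal.mul_lt_top hSfin hI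
end

section
/- Let X₂ be a Polish space continuously and injectively embedded in a topological measurable space X₁ whose Borel σ-algebra is countably generated and separates points. If every open ball of X₂ can be written as X₂ ∩ B for some B in the Borel σ-algebra of X₁, then the Borel σ-algebra of X₂ equals the trace σ-algebra 𝓑(X₁) ∩ X₂. -/
/-- Let `X₂` be a Polish (complete separable metric) space continuously and
injectively embedded via a measurable map `ι` in a measurable space `X₁` whose σ-algebra is
countably generated and separates points. If every open ball of `X₂` can be written as
`X₂ ∩ B = ι⁻¹(B)` for some `B ∈ 𝓑(X₁)`, then the Borel σ-algebra of `X₂` equals the trace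
σ-algebra `𝓑(X₁) ∩ X₂`, i.e. the comap of `𝓑(X₁)` along `ι`. -/
theorem stmt10 (X₂ : Type*) [MetricSpace X₂] [CompleteSpace X₂]
    [TopologicalSpace.SeparableSpace X₂] [m₂ : MeasurableSpace X₂] [BorelSpace X₂]
    (X₁ : Type*) [m₁ : MeasurableSpace X₁]
    [MeasurableSpace.CountablyGenerated X₁] [MeasurableSpace.SeparatesPoints X₁]
    (ι : X₂ → X₁) (hinj : Function.Injective ι) (hmeas : Measurable ι)
    (hball : ∀ (x : X₂) (r : ℝ), ∃ B : Set X₁, MeasurableSet B ∧ Metric.ball x r = ι ⁻¹' B) :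
    m₂ = MeasurableSpace.comap ι m₁ := by
  have : PolishSpace X₂ := by infer_instance
  have : StandardBorelSpace X₂ := by infer_instance
  exact (hmeas.measurableEmbedding hinj).comap_eq.symm
end
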